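/- Let μ < 0, K₀ > 0, and suppose m₁, m₂ : [0,T) → ℝ are differentiable with m₁ ≤ m₂, m₁'(t) ≤ μ·m₁(t)² + K₀·(m₂(t) − m₁(t)) and m₂'(t) ≤ μ·m₂(t)² + K₀·(m₂(t) − m₁(t)) for all t. If m₁(0) + m₂(0) ≤ 2K₀/μ, then m₁(t) + m₂(t) ≤ 2K₀/μ for all t ∈ [0,T). -/

import Mathlib

theorem stmt_10 (T μ K0 : ℝ) (hμ : μ < 0) (hK0 : 0 < K0)
    (m1 m2 m1' m2' : ℝ → ℝ)
    (hle : ∀ t ∈ Set.Ico (0 : ℝ) T, m1 t ≤ m2 t)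
    (hd1 : ∀ t ∈ Set.Ico (0 : ℝ) T, HasDerivAt m1 (m1' t) t)
    (hd2 : ∀ t ∈ Set.Ico (0 : ℝ) T, HasDerivAt m2 (m2' t) t)
    (hi1 : ∀ t ∈ Set.Ico (0 : ℝ) T, m1' t ≤ μ * (m1 t) ^ 2 + K0 * (m2 t - m1 t))
    (hi2 : ∀ t ∈ Set.Ico (0 : ℝ) T, m2' t ≤ μ * (m2 t) ^ 2 + K0 * (m2 t - m1 t))
    (h0 : m1 0 + m2 0 ≤ 2 * K0 / μ) :
    ∀ t ∈ Set.Ico (0 : ℝ) T, m1 t + m2 t ≤ 2 * K0 / μ := by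
  set c : ℝ := 2 * K0 / μ with hc
  have hμne : μ ≠ 0 := ne_of_lt hμ
  have hμc : μ * c = 2 * K0 := by rw [hc]; field_simp
  -- key differential inequality: (m1+m2)' ≤ 2K0 * (m1+m2-c)
  have key : ∀ x ∈ Set.Ico (0 : ℝ) T,
      m1' x + m2' x ≤ 2 * K0 * (m1 x + m2 x - c) := by
    intro x hx
    have h1 := hi1 x hx
    have h2 := hi2 x hx
    have hsq1 : μ * (m2 x - m1 x + c) ^ 2 ≤ 0 :=
      mul_nonpos_of_nonpos_of_nonneg hμ.le (sq_nonneg _)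
    have hsq2 : μ * (m1 x + m2 x - c) ^ 2 ≤ 0 :=
      mul_nonpos_of_nonpos_of_nonneg hμ.le (sq_nonneg _)
    have e1 : μ * (m2 x - m1 x + c) ^ 2 =
        μ * (m2 x - m1 x) ^ 2 + 2 * (μ * c) * (m2 x - m1 x) + (μ * c) * c := by ring
    have e2 : μ * (m1 x + m2 x - c) ^ 2 =
        μ * (m1 x + m2 x) ^ 2 - 2 * (μ * c) * (m1 x + m2 x) + (μ * c) * c := by ring
    rw [e1, hμc] at hsq1
    rw [e2, hμc] at hsq2
    have e3 : μ * (m2 x - m1 x) ^ 2 + μ * (m1 x + m2 x) ^ 2 =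
        2 * (μ * m1 x ^ 2) + 2 * (μ * m2 x ^ 2) := by ring
    linarith [hsq1, hsq2, e3]
  intro t ht
  obtain ⟨ht0, htT⟩ := ht
  have hsub : Set.Icc (0 : ℝ) t ⊆ Set.Ico (0 : ℝ) T := fun x hx =>
    ⟨hx.1, lt_of_le_of_lt hx.2 htT⟩
  set f : ℝ → ℝ := fun τ => (m1 τ + m2 τ - c) * Real.exp (-(2 * K0) * τ) with hf
  have hderiv : ∀ x ∈ Set.Ico (0 : ℝ) T,
      HasDerivAt f ((m1' x + m2' x - 2 * K0 * (m1 x + m2 x - c)) *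
        Real.exp (-(2 * K0) * x)) x := by
    intro x hx
    have hg : HasDerivAt (fun τ => m1 τ + m2 τ - c) (m1' x + m2' x) x :=
      ((hd1 x hx).add (hd2 x hx)).sub_const c
    have he : HasDerivAt (fun τ => Real.exp (-(2 * K0) * τ))
        (-(2 * K0) * Real.exp (-(2 * K0) * x)) x := by
      have h1 : HasDerivAt (fun τ : ℝ => -(2 * K0) * τ) (-(2 * K0)) x := by
        simpa using (hasDerivAt_id x).const_mul (-(2 * K0))
      have := h1.exp
      convert this using 1
      ring
    have := hg.mul he
    exact this.congr_deriv (by ring)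
  have hanti : AntitoneOn f (Set.Icc 0 t) := by
    apply antitoneOn_of_deriv_nonpos (convex_Icc 0 t)
    · intro x hx
      exact (hderiv x (hsub hx)).continuousAt.continuousWithinAt
    · intro x hx
      rw [interior_Icc] at hx
      exact (hderiv x (hsub ⟨hx.1.le, hx.2.le⟩)).differentiableAt.differentiableWithinAt
    · intro x hx
      rw [interior_Icc] at hx
      have hx' : x ∈ Set.Ico (0 : ℝ) T := hsub ⟨hx.1.le, hx.2.le⟩
      rw [(hderiv x hx').deriv]
      apply mul_nonpos_of_nonpos_of_nonneg
      · have := key x hx'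
        linarith
      · exact (Real.exp_pos _).le
  have hft : f t ≤ f 0 :=
    hanti (Set.left_mem_Icc.mpr ht0) (Set.right_mem_Icc.mpr ht0) ht0
  have hf0 : f 0 ≤ 0 := by
    simp only [hf, mul_zero, Real.exp_zero, mul_one]
    linarith
  have hfe : (m1 t + m2 t - c) * Real.exp (-(2 * K0) * t) ≤ 0 := le_trans hft hf0
  have hep : 0 < Real.exp (-(2 * K0) * t) := Real.exp_pos _
  nlinarith [hfe, hep]
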